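/- Exponential divergence of geodesics: let X be a δ-hyperbolic geodesic metric space. There exists an exponential function e(r) (depending only on δ) with the property that for all R, r ∈ ℕ, all x ∈ X and all geodesics c₁ : [0,a₁] → X, c₂ : [0,a₂] → X with c₁(0) = c₂(0) = x, if R + r ≤ min{a₁, a₂} and d(c₁(R), c₂(R)) > e(0), then any rectifiable path from c₁(R+r) to c₂(R+r) that stays outside the open ball B(x, R+r) has length at least e(r). -/

import Mathlib

open Set

/-- `f` restricted to `S ⊆ ℝ` is a (unit-speed) geodesic. -/
def IsGeodesicOn {X : Type*} [MetricSpace X] (f : ℝ → X) (S : Set ℝ) : Prop :=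
  ∀ s ∈ S, ∀ t ∈ S, dist (f s) (f t) = |s - t|

/-- `X` is a geodesic metric space: any two points are joined by a geodesic. -/
def GeodesicSpace (X : Type*) [MetricSpace X] : Prop :=
  ∀ x y : X, ∃ f : ℝ → X,
    IsGeodesicOn f (Icc 0 (dist x y)) ∧ f 0 = x ∧ f (dist x y) = y

/-- Every geodesic triangle of `X` is `δ`-slim: each side lies in the
`δ`-neighbourhood of the union of the other two sides. -/
def SlimTriangles (X : Type*) [MetricSpace X] (δ : ℝ) : Prop :=
  ∀ (f g h : ℝ → X) (a b c : ℝ), 0 ≤ a → 0 ≤ b → 0 ≤ c →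
    IsGeodesicOn f (Icc 0 a) → IsGeodesicOn g (Icc 0 b) → IsGeodesicOn h (Icc 0 c) →
    f a = g 0 → g b = h 0 → h c = f 0 →
    ∀ t ∈ Icc 0 c, ∃ s,
      (s ∈ Icc 0 a ∧ dist (h t) (f s) ≤ δ) ∨ (s ∈ Icc 0 b ∧ dist (h t) (g s) ≤ δ)

/-- Two rays are asymptotic (represent the same point of the Gromov boundary):
they remain at uniformly bounded distance. -/
def Asymp {X : Type*} [MetricSpace X] (f g : ℝ → X) : Prop :=
  ∃ C : ℝ, ∀ t : ℝ, 0 ≤ t → dist (f t) (g t) ≤ C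

/-- Exponential divergence of geodesics in a `δ`-hyperbolic geodesic space: there
is an exponential function `e : ℕ → ℝ` (of the form `e r = A·C^r`, depending only
on `δ`) such that for geodesics `c₁, c₂` issuing from a common point `x`, if
`d(c₁ R, c₂ R) > e 0` then any rectifiable path from `c₁(R+r)` to `c₂(R+r)`
staying outside the ball `B(x, R+r)` has length at least `e r`. -/
lemma aux_sq_le_two_pow : ∀ n : ℕ, 4 ≤ n → ((n:ℝ))^2 ≤ 2^n := by
  intro n hn
  induction n with
  | zero => norm_num at hn
  | succ k ih =>
    rcases Nat.lt_or_ge k 4 with hk | hk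
    · have : k = 3 := by omega
      subst this; norm_num
    · have h1 := ih hk
      have hk' : (4:ℝ) ≤ k := by exact_mod_cast hk
      push_cast
      calc ((k:ℝ)+1)^2 ≤ 2*(k:ℝ)^2 := by nlinarith
        _ ≤ 2*2^k := by linarith
        _ = 2^(k+1) := by ring

lemma aux_exists_K (δ : ℝ) (hδ : 0 < δ) : ∃ K : ℕ, 2*δ*K + 6*δ + 2 ≤ 2^K := by
  refine ⟨max 4 ⌈8*δ + 2⌉₊, ?_⟩
  set K := max 4 ⌈8*δ + 2⌉₊ with hKdef
  have hK4 : (4:ℝ) ≤ (K:ℝ) := by exact_mod_cast le_max_left 4 ⌈8*δ + 2⌉₊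
  have hKc : (8*δ + 2 : ℝ) ≤ (K:ℝ) := by
    calc (8*δ+2:ℝ) ≤ (⌈8*δ + 2⌉₊ : ℝ) := Nat.le_ceil _
      _ ≤ (K:ℝ) := by exact_mod_cast le_max_right 4 ⌈8*δ + 2⌉₊
  have hsq : ((K:ℝ))^2 ≤ 2^K := aux_sq_le_two_pow K (by exact_mod_cast hK4)
  nlinarith [hδ.le, hK4, hKc]

lemma aux_chain {X : Type*} [MetricSpace X] (p : ℝ → X) (hp : ContinuousOn p (Icc 0 1))
    (hfin : eVariationOn p (Icc 0 1) ≠ ⊤) :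
    ∃ (m : ℕ) (t : ℕ → ℝ), Monotone t ∧ (∀ i, t i ∈ Icc (0:ℝ) 1) ∧ t 0 = 0 ∧ t m = 1 ∧
      (∀ i, dist (p (t i)) (p (t (i+1))) ≤ 1) ∧
      (m : ℝ) ≤ (eVariationOn p (Icc 0 1)).toReal + 1 := by
  classical
  set v := (eVariationOn p (Icc 0 1)).toReal with hv
  set S : ℝ → Set ℝ := fun a => {u | u ∈ Icc a 1 ∧ dist (p u) (p a) ≤ 1} with hS
  set next : ℝ → ℝ := fun a => sSup (S a) with hnext
  have hmemS : ∀ a ∈ Icc (0:ℝ) 1, next a ∈ S a := by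
    intro a ha
    have hne : (S a).Nonempty := ⟨a, ⟨le_refl a, ha.2⟩, by simp⟩
    have hbdd : BddAbove (S a) := ⟨1, fun u hu => hu.1.2⟩
    have hsub : Icc a 1 ⊆ Icc (0:ℝ) 1 := Icc_subset_Icc ha.1 le_rfl
    have hcl : IsClosed (S a) := by
      have hc : ContinuousOn (fun u => dist (p u) (p a)) (Icc a 1) :=
        (continuous_id.dist continuous_const).comp_continuousOn (hp.mono hsub)
      have heq : S a = Icc a 1 ∩ (fun u => dist (p u) (p a)) ⁻¹' Iic 1 := by
        ext u; simp [hS]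
      rw [heq]
      exact hc.preimage_isClosed_of_isClosed isClosed_Icc isClosed_Iic
    exact hcl.csSup_mem hne hbdd
  have hgap : ∀ a ∈ Icc (0:ℝ) 1, next a < 1 → 1 ≤ dist (p (next a)) (p a) := by
    intro a ha hlt
    have huS := hmemS a ha
    have hau : a ≤ next a := huS.1.1
    have hu1 : next a ≤ 1 := huS.1.2
    have hclos : next a ∈ closure (Ioc (next a) 1) := by
      rw [closure_Ioc (ne_of_lt hlt)]; exact ⟨le_rfl, hu1⟩
    have hnb : (nhdsWithin (next a) (Ioc (next a) 1)).NeBot :=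
      mem_closure_iff_nhdsWithin_neBot.1 hclos
    have hsub : Icc a 1 ⊆ Icc (0:ℝ) 1 := Icc_subset_Icc ha.1 le_rfl
    have hc : ContinuousOn (fun u => dist (p u) (p a)) (Icc a 1) :=
      (continuous_id.dist continuous_const).comp_continuousOn (hp.mono hsub)
    have hcw : ContinuousWithinAt (fun u => dist (p u) (p a)) (Ioc (next a) 1) (next a) :=
      (hc (next a) ⟨hau, hu1⟩).mono (fun z hz => ⟨hau.trans hz.1.le, hz.2⟩)
    refine ge_of_tendsto hcw ?_
    filter_upwards [self_mem_nhdsWithin] with z hz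
    by_contra hcon
    push_neg at hcon
    have : z ∈ S a := ⟨⟨hau.trans hz.1.le, hz.2⟩, hcon.le⟩
    exact absurd (le_csSup ⟨1, fun u hu => hu.1.2⟩ this) (not_le.2 hz.1)
  -- the sequence
  set t : ℕ → ℝ := fun i => next^[i] 0 with ht
  have ht0 : t 0 = 0 := rfl
  have htsucc : ∀ i, t (i+1) = next (t i) := by
    intro i; simp [ht, Function.iterate_succ_apply']
  have htIcc : ∀ i, t i ∈ Icc (0:ℝ) 1 := by
    intro i
    induction i with
    | zero => simp [ht0]
    | succ k ihk =>
      have := hmemS (t k) ihk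
      rw [htsucc]
      exact ⟨ihk.1.trans this.1.1, this.1.2⟩
  have htmono : Monotone t := by
    apply monotone_nat_of_le_succ
    intro i; rw [htsucc]; exact (hmemS (t i) (htIcc i)).1.1
  have htdist : ∀ i, dist (p (t i)) (p (t (i+1))) ≤ 1 := by
    intro i; rw [htsucc, dist_comm]; exact (hmemS (t i) (htIcc i)).2
  set m := ⌊v⌋₊ + 1 with hm
  have hvnn : 0 ≤ v := ENNReal.toReal_nonneg
  have htm : t m = 1 := by
    by_contra hne
    have htm1 : t m < 1 := lt_of_le_of_ne (htIcc m).2 hne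
    have hones : ∀ i < m, (1:ENNReal) ≤ edist (p (t (i+1))) (p (t i)) := by
      intro i hi
      have hlt : t (i+1) < 1 := lt_of_le_of_lt (htmono (by omega : i+1 ≤ m)) htm1
      have := hgap (t i) (htIcc i) (by rw [← htsucc] at *; exact hlt)
      rw [← htsucc] at this
      rw [edist_dist]
      exact ENNReal.one_le_ofReal.2 this
    have hsum : (m : ENNReal) ≤ eVariationOn p (Icc 0 1) := by
      calc (m : ENNReal) = ∑ _i ∈ Finset.range m, 1 := by simp
        _ ≤ ∑ i ∈ Finset.range m, edist (p (t (i+1))) (p (t i)) := by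
            apply Finset.sum_le_sum
            intro i hi; exact hones i (Finset.mem_range.1 hi)
        _ ≤ eVariationOn p (Icc 0 1) := eVariationOn.sum_le (f := p) (n := m) htmono htIcc
    have : (m : ℝ) ≤ v := by
      have := ENNReal.toReal_mono hfin hsum
      simpa using this
    have : v < m := by
      rw [hm]; push_cast; exact Nat.lt_floor_add_one v
    linarith
  exact ⟨m, t, htmono, htIcc, ht0, htm, htdist, by push_cast [hm]; nlinarith [Nat.floor_le hvnn]⟩

lemma aux_chain_near_geodesic {X : Type*} [MetricSpace X] {δ : ℝ} (hδ : 0 < δ)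
    (hgeo : GeodesicSpace X) (hslim : SlimTriangles X δ) :
    ∀ (n m : ℕ), m ≤ 2^n → ∀ y : ℕ → X, (∀ i, dist (y i) (y (i+1)) ≤ 1) →
      ∀ f : ℝ → X, IsGeodesicOn f (Icc 0 (dist (y 0) (y m))) → f 0 = y 0 →
      f (dist (y 0) (y m)) = y m →
      ∀ s ∈ Icc 0 (dist (y 0) (y m)), ∃ i, i ≤ m ∧ dist (f s) (y i) ≤ n*δ + 1 := by
  intro n
  induction n with
  | zero =>
    intro m hm y hy f hf hf0 hfe s hs
    refine ⟨0, Nat.zero_le _, ?_⟩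
    have h1 : dist (y 0) (y m) ≤ 1 := by
      interval_cases m
      · simp
      · exact hy 0
    have h0m : (0:ℝ) ∈ Icc 0 (dist (y 0) (y m)) := ⟨le_rfl, dist_nonneg⟩
    have := hf s hs 0 h0m
    rw [hf0] at this
    rw [this]
    rw [abs_of_nonneg (by linarith [hs.1])]
    push_cast
    linarith [hs.2]
  | succ n ih =>
    intro m hm y hy f hf hf0 hfe s hs
    set L := dist (y 0) (y m) with hL
    set k := m / 2 with hk
    have hk2 : k ≤ 2^n := by
      have : 2^(n+1) = 2*2^n := by ring
      omega
    have hmk2 : m - k ≤ 2^n := by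
      have : 2^(n+1) = 2*2^n := by ring
      omega
    have hkm : k ≤ m := Nat.div_le_self m 2
    obtain ⟨f₁, hf₁, hf₁0, hf₁e⟩ := hgeo (y 0) (y k)
    obtain ⟨f₂, hf₂, hf₂0, hf₂e⟩ := hgeo (y k) (y m)
    set L₁ := dist (y 0) (y k) with hL₁
    set L₂ := dist (y k) (y m) with hL₂
    set h : ℝ → X := fun t => f (L - t) with hh
    have hhgeo : IsGeodesicOn h (Icc 0 L) := by
      intro a ha b hb
      have ha' : L - a ∈ Icc 0 L := ⟨by linarith [ha.2], by linarith [ha.1]⟩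
      have hb' : L - b ∈ Icc 0 L := ⟨by linarith [hb.2], by linarith [hb.1]⟩
      rw [hh]
      simp only
      rw [hf _ ha' _ hb']
      rw [show L - a - (L - b) = b - a by ring, abs_sub_comm]
    have hcyc1 : f₁ L₁ = f₂ 0 := by rw [hf₁e, hf₂0]
    have hcyc2 : f₂ L₂ = h 0 := by
      rw [hf₂e, hh]; simp only; rw [sub_zero, hfe]
    have hcyc3 : h L = f₁ 0 := by
      rw [hf₁0, hh]; simp only; rw [sub_self, hf0]
    have hsmem : L - s ∈ Icc 0 L := ⟨by linarith [hs.2], by linarith [hs.1]⟩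
    obtain ⟨s', hcase⟩ := hslim f₁ f₂ h L₁ L₂ L dist_nonneg dist_nonneg dist_nonneg
      hf₁ hf₂ hhgeo hcyc1 hcyc2 hcyc3 (L - s) hsmem
    have hhs : h (L - s) = f s := by rw [hh]; simp only; rw [show L - (L - s) = s by ring]
    rw [hhs] at hcase
    rcases hcase with ⟨hs'1, hd1⟩ | ⟨hs'2, hd2⟩
    · obtain ⟨i, hi, hdi⟩ := ih k hk2 y hy f₁ hf₁ hf₁0 hf₁e s' hs'1
      refine ⟨i, hi.trans hkm, ?_⟩
      calc dist (f s) (y i) ≤ dist (f s) (f₁ s') + dist (f₁ s') (y i) := dist_triangle _ _ _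
        _ ≤ δ + (n*δ + 1) := add_le_add hd1 hdi
        _ = (↑(n+1):ℝ)*δ + 1 := by push_cast; ring
    · set z : ℕ → X := fun i => y (k + i) with hz
      have hzy : ∀ i, dist (z i) (z (i+1)) ≤ 1 := by
        intro i; rw [hz]; simp only
        rw [show k + (i+1) = (k+i) + 1 by ring]
        exact hy (k+i)
      have hz0 : z 0 = y k := by rw [hz]; simp
      have hze : z (m - k) = y m := by rw [hz]; simp only; rw [Nat.add_sub_cancel' hkm]
      have hdz : dist (z 0) (z (m-k)) = L₂ := by rw [hz0, hze]
      obtain ⟨i, hi, hdi⟩ := ih (m-k) hmk2 z hzy f₂ (by rwa [hdz]) (by rwa [hz0])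
        (by rw [hdz, hze]; exact hf₂e) s' (by rwa [hdz])
      refine ⟨k + i, by omega, ?_⟩
      have : z i = y (k+i) := rfl
      rw [← this]
      calc dist (f s) (y (k+i)) ≤ dist (f s) (f₂ s') + dist (f₂ s') (z i) := by
            rw [this] at *; exact dist_triangle _ _ _
        _ ≤ δ + (n*δ + 1) := add_le_add hd2 hdi
        _ = (↑(n+1):ℝ)*δ + 1 := by push_cast; ring

set_option maxHeartbeats 1000000 in
theorem exponential_divergence {X : Type*} [MetricSpace X] (δ : ℝ) (hδ : 0 < δ)
    (hgeo : GeodesicSpace X) (hslim : SlimTriangles X δ) :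
    ∃ (e : ℕ → ℝ) (A C : ℝ), 0 < A ∧ 1 < C ∧ (∀ r : ℕ, e r = A * C ^ r) ∧
      ∀ (R r : ℕ) (x : X) (a₁ a₂ : ℝ) (c₁ c₂ : ℝ → X),
        IsGeodesicOn c₁ (Icc 0 a₁) → IsGeodesicOn c₂ (Icc 0 a₂) →
        c₁ 0 = x → c₂ 0 = x →
        ((R : ℝ) + (r : ℝ)) ≤ min a₁ a₂ →
        e 0 < dist (c₁ (R : ℝ)) (c₂ (R : ℝ)) →
        ∀ p : ℝ → X, ContinuousOn p (Icc 0 1) →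
          p 0 = c₁ ((R : ℝ) + (r : ℝ)) → p 1 = c₂ ((R : ℝ) + (r : ℝ)) →
          (∀ t ∈ Icc (0:ℝ) 1, (R : ℝ) + (r : ℝ) ≤ dist x (p t)) →
          ENNReal.ofReal (e r) ≤ eVariationOn p (Icc 0 1) := by
  obtain ⟨K, hK⟩ := aux_exists_K δ hδ
  have hK0 : (0:ℝ) ≤ K := Nat.cast_nonneg K
  set M : ℝ := δ*K + 2*δ + 1 with hM
  set A : ℝ := 2*M + 2*δ with hA
  set C : ℝ := (2:ℝ)^((1:ℝ)/δ) with hC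
  have hApos : 0 < A := by positivity
  have hC1 : 1 < C := by
    rw [hC]
    rw [Real.one_lt_rpow_iff_of_pos (by norm_num)]
    left
    exact ⟨by norm_num, by positivity⟩
  have hCpos : 0 < C := lt_trans one_pos hC1
  refine ⟨fun r => A * C^r, A, C, hApos, hC1, fun r => rfl, ?_⟩
  intro R r x a₁ a₂ c₁ c₂ hc₁ hc₂ hc₁0 hc₂0 hmin hD p hp hp0 hp1 hout
  by_contra hcon
  push_neg at hcon
  have hfin : eVariationOn p (Icc 0 1) ≠ ⊤ := hcon.ne_top
  set v := (eVariationOn p (Icc 0 1)).toReal with hv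
  have hvlt : v < A * C^r := ENNReal.toReal_lt_of_lt_ofReal hcon
  have hvnn : 0 ≤ v := ENNReal.toReal_nonneg
  set T : ℝ := (R:ℝ) + r with hT
  have hT1 : T ≤ a₁ := (le_min_iff.1 hmin).1
  have hT2 : T ≤ a₂ := (le_min_iff.1 hmin).2
  have hrnn : (0:ℝ) ≤ r := Nat.cast_nonneg r
  have hRnn : (0:ℝ) ≤ R := Nat.cast_nonneg R
  have hRT : (R:ℝ) ≤ T := by rw [hT]; linarith
  have hT0 : (0:ℝ) ≤ T := by linarith
  have h0a₁ : (0:ℝ) ≤ a₁ := hT0.trans hT1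
  have h0a₂ : (0:ℝ) ≤ a₂ := hT0.trans hT2
  have hxc₁ : ∀ u, 0 ≤ u → u ≤ T → dist x (c₁ u) = u := by
    intro u h1 h2
    rw [← hc₁0, hc₁ 0 ⟨le_rfl, h0a₁⟩ u ⟨h1, h2.trans hT1⟩, abs_sub_comm, sub_zero,
      abs_of_nonneg h1]
  have hxc₂ : ∀ u, 0 ≤ u → u ≤ T → dist x (c₂ u) = u := by
    intro u h1 h2
    rw [← hc₂0, hc₂ 0 ⟨le_rfl, h0a₂⟩ u ⟨h1, h2.trans hT2⟩, abs_sub_comm, sub_zero,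
      abs_of_nonneg h1]
  have hDA : A < dist (c₁ (R:ℝ)) (c₂ (R:ℝ)) := by simpa using hD
  have hRM : M + δ < (R:ℝ) := by
    have h2R : dist (c₁ (R:ℝ)) (c₂ (R:ℝ)) ≤ (R:ℝ) + R := by
      calc dist (c₁ (R:ℝ)) (c₂ (R:ℝ)) ≤ dist (c₁ (R:ℝ)) x + dist x (c₂ (R:ℝ)) :=
            dist_triangle _ _ _
        _ = (R:ℝ) + R := by rw [dist_comm (c₁ (R:ℝ)) x, hxc₁ R hRnn hRT, hxc₂ R hRnn hRT]
    rw [hA] at hDA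
    linarith
  have hMpos : 0 < M := by rw [hM]; positivity
  set R' : ℝ := (R:ℝ) - M with hR'
  have hR'0 : 0 ≤ R' := by rw [hR']; linarith
  have hR'T : R' ≤ T := by rw [hR']; linarith
  -- divergence at level R'
  have hD' : 2*δ < dist (c₁ R') (c₂ R') := by
    have h4 : dist (c₁ (R:ℝ)) (c₂ (R:ℝ)) ≤
        dist (c₁ (R:ℝ)) (c₁ R') + dist (c₁ R') (c₂ R') + dist (c₂ R') (c₂ (R:ℝ)) :=
      dist_triangle4 _ _ _ _
    have e1 : dist (c₁ (R:ℝ)) (c₁ R') = M := by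
      rw [hc₁ R ⟨hRnn, hRT.trans hT1⟩ R' ⟨hR'0, hR'T.trans hT1⟩, hR',
        show (R:ℝ) - ((R:ℝ) - M) = M by ring, abs_of_nonneg hMpos.le]
    have e2 : dist (c₂ R') (c₂ (R:ℝ)) = M := by
      rw [hc₂ R' ⟨hR'0, hR'T.trans hT2⟩ R ⟨hRnn, hRT.trans hT2⟩, hR',
        show (R:ℝ) - M - (R:ℝ) = -M by ring, abs_neg, abs_of_nonneg hMpos.le]
    rw [e1, e2] at h4
    linarith [hA, hDA, h4]
  -- geodesic between the tips
  obtain ⟨G, hG, hG0, hGe⟩ := hgeo (c₁ T) (c₂ T)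
  set L' : ℝ := dist (c₁ T) (c₂ T) with hL'
  -- slim triangle x, c₁ T, c₂ T  at the point c₁ R'
  set g2 : ℝ → X := fun t => c₂ (T - t) with hg2def
  have hg2 : IsGeodesicOn g2 (Icc 0 T) := by
    intro a ha b hb
    rw [hg2def]
    simp only
    rw [hc₂ (T-a) ⟨by linarith [ha.2], by linarith [ha.1]⟩ (T-b)
      ⟨by linarith [hb.2], by linarith [hb.1]⟩]
    rw [show T - a - (T - b) = b - a by ring, abs_sub_comm]
  have hc₁T : IsGeodesicOn c₁ (Icc 0 T) := fun s hs t ht =>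
    hc₁ s ⟨hs.1, hs.2.trans hT1⟩ t ⟨ht.1, ht.2.trans hT1⟩
  have hcyc1 : G L' = g2 0 := by rw [hGe, hg2def]; simp
  have hcyc2 : g2 T = c₁ 0 := by rw [hg2def]; simp only; rw [sub_self, hc₂0, hc₁0]
  have hcyc3 : c₁ T = G 0 := by rw [hG0]
  obtain ⟨s₀, hcase⟩ := hslim G g2 c₁ L' T T dist_nonneg hT0 hT0 hG hg2 hc₁T
    hcyc1 hcyc2 hcyc3 R' ⟨hR'0, hR'T⟩
  rcases hcase with ⟨hs₀, hw⟩ | ⟨hs₀, hw⟩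
  · -- main case: c₁ R' is δ-close to the geodesic G
    obtain ⟨m, t, htmono, htIcc, ht0, htm, htdist, hmv⟩ := aux_chain p hp hfin
    set y : ℕ → X := fun i => p (t i) with hy
    have hy0 : y 0 = c₁ T := by rw [hy]; simp only; rw [ht0, hp0]
    have hym : y m = c₂ T := by rw [hy]; simp only; rw [htm, hp1]
    have hdym : dist (y 0) (y m) = L' := by rw [hy0, hym]
    have hex : ∃ n : ℕ, m ≤ 2^n := ⟨m, (Nat.lt_two_pow_self (n := m)).le⟩
    obtain ⟨n, hnm, hminn⟩ : ∃ n : ℕ, m ≤ 2^n ∧ ∀ k, k < n → ¬ m ≤ 2^k :=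
      ⟨Nat.find hex, Nat.find_spec hex, fun k hk => Nat.find_min hex hk⟩
    obtain ⟨i, him, hdi⟩ := aux_chain_near_geodesic hδ hgeo hslim n m hnm y htdist G
      (by rwa [hdym]) (by rw [hy0]; exact hG0)
      (by rw [hdym]; rw [hym]; exact hGe) s₀ (by rwa [hdym])
    have hkey : (R:ℝ) + r ≤ dist x (p (t i)) := hout (t i) (htIcc i)
    have hchain : dist x (p (t i)) ≤ R' + δ + ((n:ℝ)*δ + 1) := by
      calc dist x (p (t i)) ≤ dist x (c₁ R') + dist (c₁ R') (G s₀) + dist (G s₀) (p (t i)) :=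
            dist_triangle4 _ _ _ _
        _ ≤ R' + δ + ((n:ℝ)*δ + 1) := by
            rw [hxc₁ R' hR'0 hR'T]
            exact add_le_add (add_le_add le_rfl hw) hdi
    have hcrit : (r:ℝ) + M ≤ (n:ℝ)*δ + δ + 1 := by rw [hR'] at hchain; linarith
    cases n with
    | zero =>
      have hδK : 0 ≤ δ * (K:ℝ) := by positivity
      rw [hM] at hcrit
      push_cast at hcrit
      linarith
    | succ n' =>
      have hfind : ¬ (m ≤ 2^n') := hminn n' (Nat.lt_succ_self n')
      have h2n' : (2:ℝ)^n' ≤ v := by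
        have h1 : 2^n' + 1 ≤ m := by omega
        have h2 : ((2^n' + 1 : ℕ) : ℝ) ≤ (m:ℝ) := by exact_mod_cast h1
        push_cast at h2
        linarith
      have hstep : (K:ℝ)*δ + (r:ℝ) ≤ (n':ℝ)*δ := by
        rw [hM] at hcrit
        push_cast at hcrit
        linarith
      have hexp2 : (K:ℝ) + (r:ℝ)/δ ≤ (n':ℝ) := by
        rw [add_comm, ← le_sub_iff_add_le, div_le_iff₀ hδ]
        linarith
      have hCr : C^r = (2:ℝ)^((r:ℝ)/δ) := by
        rw [hC, ← Real.rpow_natCast ((2:ℝ)^((1:ℝ)/δ)) r, ← Real.rpow_mul (by norm_num)]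
        congr 1
        field_simp
      have hfin2 : A * C^r ≤ (2:ℝ)^n' := by
        have hKA : A ≤ (2:ℝ)^K := by
          rw [hA, hM]; linarith [hK]
        calc A * C^r ≤ (2:ℝ)^K * C^r :=
              mul_le_mul_of_nonneg_right hKA (by positivity)
          _ = (2:ℝ)^((K:ℝ)) * (2:ℝ)^((r:ℝ)/δ) := by rw [hCr, Real.rpow_natCast]
          _ = (2:ℝ)^((K:ℝ) + (r:ℝ)/δ) := (Real.rpow_add (by norm_num) _ _).symm
          _ ≤ (2:ℝ)^((n':ℝ)) := Real.rpow_le_rpow_of_exponent_le (by norm_num) hexp2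
          _ = (2:ℝ)^n' := Real.rpow_natCast _ _
      linarith
  · -- degenerate case: c₁ R' is δ-close to the reversed geodesic c₂, contradiction
    set q : ℝ := T - s₀ with hq
    have hqT : q ∈ Icc 0 T := ⟨by linarith [hs₀.2], by linarith [hs₀.1]⟩
    have hg2s : g2 s₀ = c₂ q := by rw [hg2def]
    rw [hg2s] at hw
    have habs : |q - R'| ≤ δ := by
      have h1 := abs_dist_sub_le (c₂ q) (c₁ R') x
      rw [dist_comm (c₂ q) x, dist_comm (c₁ R') x, hxc₂ q hqT.1 hqT.2,
        hxc₁ R' hR'0 hR'T, dist_comm (c₂ q) (c₁ R')] at h1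
      exact h1.trans hw
    have h2 : dist (c₂ q) (c₂ R') = |q - R'| :=
      hc₂ q ⟨hqT.1, hqT.2.trans hT2⟩ R' ⟨hR'0, hR'T.trans hT2⟩
    have h3 : dist (c₁ R') (c₂ R') ≤ dist (c₁ R') (c₂ q) + dist (c₂ q) (c₂ R') :=
      dist_triangle _ _ _
    rw [h2] at h3
    linarith
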